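/- Let f : 2^V → ℝ≥0 be monotone. (i) If f is α-weakly DR-submodular for some α ∈ (0,1], then for every feasible subset S ⊆ V and every point x = (p_1,…,p_K) ∈ ∏_{k=1}^K Δ_{n_k}: ⟨ Σ_{k=1}^K (1/B_k)·1_{S∩V_k} − x, ∇F(x) ⟩ ≥ α·f(S) − (α + 1/α)·F(x). (ii) If f is (γ,β)-weakly submodular for some γ ∈ (0,1] and β ≥ 1, then for every feasible subset S ⊆ V and every x ∈ ∏_{k=1}^K Δ_{n_k}: ⟨ Σ_{k=1}^K (1/B_k)·1_{S∩V_k} − x, ∇F(x) ⟩ ≥ γ²·f(S) − (β + β(1−γ) + γ²)·F(x). -/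

import Mathlib

open Finset

noncomputable section

namespace Multinoulli

variable {K : ℕ}

/-- An element of the ground set `V`: a community index `k` together with the
index `m` of the element `v_k^m` inside its community `V_k`. -/
abbrev Elem (n : Fin K → ℕ) := Σ k : Fin K, Fin (n k)

/-- A sampling slot: a community `k` together with a trial index `b ∈ {1,…,B_k}`. -/
abbrev Slot (B : Fin K → ℕ) := Σ k : Fin K, Fin (B k)

/-- A joint outcome of all the independent multinoulli trials; `none` encodes a
draw of `∅`, which contributes no element. -/
abbrev Choice (n B : Fin K → ℕ) := ∀ s : Slot B, Option (Fin (n s.1))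

/-- The probability that `Multi(p_k)` (the `k`-th block of `x`) assigns to a given
outcome: `x ⟨k,m⟩` for the element `v_k^m` and `1 - Σ_m x ⟨k,m⟩` for `∅`. -/
def prob (n : Fin K → ℕ) (x : Elem n → ℝ) (k : Fin K) : Option (Fin (n k)) → ℝ
  | some m => x ⟨k, m⟩
  | none => 1 - ∑ m : Fin (n k), x ⟨k, m⟩

/-- The probability of the joint outcome `e` (all trials are mutually independent). -/
def jointProb (n B : Fin K → ℕ) (x : Elem n → ℝ) (e : Choice n B) : ℝ :=
  ∏ s : Slot B, prob n x s.1 (e s)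

/-- The subset of the ground set selected by the trials whose slot lies in `A`
(a draw of `∅` contributes no element to the union). -/
def chosen (n B : Fin K → ℕ) (e : Choice n B) (A : Finset (Slot B)) : Finset (Elem n) :=
  A.biUnion fun s => ((e s).map fun m => (⟨s.1, m⟩ : Elem n)).toFinset

/-- The Multinoulli Extension `F` of the set function `f`:
`F(x) = E[f(∪_{k,b} {e_k^b})]` for mutually independent `e_k^b ∼ Multi(p_k)`. -/
def ME (n B : Fin K → ℕ) (f : Finset (Elem n) → ℝ) (x : Elem n → ℝ) : ℝ :=
  ∑ e : Choice n B, f (chosen n B e Finset.univ) * jointProb n B x e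

/-- The first-order partial derivative `∂G/∂x_i` at `x`. -/
def pderiv (n : Fin K → ℕ) (G : (Elem n → ℝ) → ℝ) (i : Elem n) (x : Elem n → ℝ) : ℝ :=
  deriv (fun t => G (Function.update x i t)) (x i)

/-- The gradient `∇G(x)`. -/
def grad (n : Fin K → ℕ) (G : (Elem n → ℝ) → ℝ) (x : Elem n → ℝ) : Elem n → ℝ :=
  fun i => pderiv n G i x

/-- The second-order partial derivative `∂²G/∂x_i∂x_j` at `x`. -/
def pderiv2 (n : Fin K → ℕ) (G : (Elem n → ℝ) → ℝ) (i j : Elem n) (x : Elem n → ℝ) : ℝ :=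
  pderiv n (fun y => pderiv n G j y) i x

/-- The Euclidean inner product on `∏_k ℝ^{n_k}`. -/
def inner' (n : Fin K → ℕ) (u v : Elem n → ℝ) : ℝ := ∑ i : Elem n, u i * v i

/-- Membership in the product of simplices `∏_{k=1}^K Δ_{n_k}`. -/
def InSimplex (n : Fin K → ℕ) (x : Elem n → ℝ) : Prop :=
  (∀ i, 0 ≤ x i) ∧ ∀ k : Fin K, ∑ m : Fin (n k), x ⟨k, m⟩ ≤ 1

/-- Feasibility for the partition constraint: `|S ∩ V_k| ≤ B_k` for all `k`. -/
def Feasible (n B : Fin K → ℕ) (S : Finset (Elem n)) : Prop :=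
  ∀ k : Fin K, (S.filter fun i => i.1 = k).card ≤ B k

/-- Monotonicity of a set function. -/
def MonotoneSet (n : Fin K → ℕ) (f : Finset (Elem n) → ℝ) : Prop :=
  ∀ A B : Finset (Elem n), A ⊆ B → f A ≤ f B

/-- The marginal contribution `f(v|A) = f(A ∪ {v}) - f(A)`. -/
def marg (n : Fin K → ℕ) (f : Finset (Elem n) → ℝ) (v : Elem n) (A : Finset (Elem n)) : ℝ :=
  f (insert v A) - f A

/-- `α`-weak DR-submodularity: `f(v|A) ≥ α·f(v|B)` for all `A ⊆ B` and `v ∉ B`. -/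
def WeaklyDR (n : Fin K → ℕ) (f : Finset (Elem n) → ℝ) (α : ℝ) : Prop :=
  ∀ A B : Finset (Elem n), A ⊆ B → ∀ v, v ∉ B → α * marg n f v B ≤ marg n f v A

/-- `γ`-weak submodularity from below. -/
def WeaklyBelow (n : Fin K → ℕ) (f : Finset (Elem n) → ℝ) (γ : ℝ) : Prop :=
  ∀ A B : Finset (Elem n), A ⊆ B → γ * (f B - f A) ≤ ∑ v ∈ B \ A, marg n f v A

/-- `β`-weak submodularity from above. -/
def WeaklyAbove (n : Fin K → ℕ) (f : Finset (Elem n) → ℝ) (β : ℝ) : Prop :=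
  ∀ A B : Finset (Elem n), A ⊆ B → ∑ v ∈ B \ A, marg n f v (B.erase v) ≤ β * (f B - f A)

/-- The scaled indicator vector `Σ_{k=1}^K (1/B_k)·1_{S∩V_k}`. -/
def indVec (n B : Fin K → ℕ) (S : Finset (Elem n)) : Elem n → ℝ :=
  fun i => if i ∈ S then ((B i.1 : ℝ))⁻¹ else 0

section Aux

variable {K : ℕ}

/-- Product of the probabilities of all slots except `s`. -/
def probExcept (n B : Fin K → ℕ) (x : Elem n → ℝ) (s : Slot B) (e : Choice n B) : ℝ :=
  ∏ s' ∈ Finset.univ.erase s, prob n x s'.1 (e s')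

/-- The random set with slot `s` forced to draw `∅`. -/
def Qs (n B : Fin K → ℕ) (e : Choice n B) (s : Slot B) : Finset (Elem n) :=
  chosen n B (Function.update e s none) Finset.univ

/-- Coefficient of the derivative of `prob` in coordinate `i`. -/
def cfK (n : Fin K → ℕ) (i : Elem n) (k : Fin K) : Option (Fin (n k)) → ℝ
  | some m => if (⟨k, m⟩ : Elem n) = i then 1 else 0
  | none => if k = i.1 then -1 else 0

variable {n B : Fin K → ℕ}

lemma prob_sum (x : Elem n → ℝ) (k : Fin K) :
    ∑ o : Option (Fin (n k)), prob n x k o = 1 := by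
  rw [Fintype.sum_option]
  simp [prob]

lemma jointProb_split (x : Elem n → ℝ) (s : Slot B) (e : Choice n B) :
    jointProb n B x e = prob n x s.1 (e s) * probExcept n B x s e := by
  rw [jointProb, probExcept]
  exact (Finset.mul_prod_erase Finset.univ (fun s' => prob n x s'.1 (e s'))
    (Finset.mem_univ s)).symm

lemma probExcept_update (x : Elem n → ℝ) (s : Slot B) (e : Choice n B)
    (o : Option (Fin (n s.1))) :
    probExcept n B x s (Function.update e s o) = probExcept n B x s e := by
  refine Finset.prod_congr rfl fun s' hs' => ?_
  rw [Function.update_of_ne (Finset.ne_of_mem_erase hs')]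

lemma mem_chosen {e : Choice n B} {A : Finset (Slot B)} {v : Elem n} :
    v ∈ chosen n B e A ↔ ∃ s ∈ A, ((e s).map fun m => (⟨s.1, m⟩ : Elem n)) = some v := by
  simp [chosen, Option.mem_toFinset, eq_comm]

lemma chosen_update (e : Choice n B) (s : Slot B) (o : Option (Fin (n s.1))) :
    chosen n B (Function.update e s o) Finset.univ
      = (o.map fun m => (⟨s.1, m⟩ : Elem n)).toFinset ∪ Qs n B e s := by
  ext v
  simp only [mem_chosen, Finset.mem_union, Option.mem_toFinset, Qs]
  constructor
  · rintro ⟨s', -, hs'⟩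
    by_cases h : s' = s
    · subst h; rw [Function.update_self] at hs'; left; exact hs'
    · right
      rw [Function.update_of_ne h] at hs'
      refine ⟨s', Finset.mem_univ _, ?_⟩
      rwa [Function.update_of_ne h]
  · rintro (h | ⟨s', -, hs'⟩)
    · exact ⟨s, Finset.mem_univ _, by rwa [Function.update_self]⟩
    · by_cases h : s' = s
      · subst h; rw [Function.update_self] at hs'; simp at hs'
      · rw [Function.update_of_ne h] at hs'
        refine ⟨s', Finset.mem_univ _, ?_⟩
        rwa [Function.update_of_ne h]

end Aux
section Aux2
variable {K : ℕ} {n B : Fin K → ℕ}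

lemma chosen_eq_union (e : Choice n B) (s : Slot B) :
    chosen n B e Finset.univ
      = ((e s).map fun m => (⟨s.1, m⟩ : Elem n)).toFinset ∪ Qs n B e s := by
  conv_lhs => rw [← Function.update_eq_self s e]
  exact chosen_update e s (e s)

lemma Qs_subset (e : Choice n B) (s : Slot B) :
    Qs n B e s ⊆ chosen n B e Finset.univ := by
  rw [chosen_eq_union e s]; exact Finset.subset_union_right

lemma R_cases (e : Choice n B) (s : Slot B) :
    chosen n B e Finset.univ = Qs n B e s ∨
      ∃ v, v ∉ Qs n B e s ∧ chosen n B e Finset.univ = insert v (Qs n B e s) := by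
  rw [chosen_eq_union e s]
  cases h : e s with
  | none => left; simp
  | some m =>
    by_cases hv : (⟨s.1, m⟩ : Elem n) ∈ Qs n B e s
    · left
      exact Finset.union_eq_right.mpr (by simpa using hv)
    · right
      exact ⟨⟨s.1, m⟩, hv, by simp⟩

lemma jointProb_nonneg {x : Elem n → ℝ} (hx : InSimplex n x) (e : Choice n B) :
    0 ≤ jointProb n B x e := by
  refine Finset.prod_nonneg fun s _ => ?_
  cases h : e s with
  | none => simpa [prob] using hx.2 s.1
  | some m => exact hx.1 _

lemma jointProb_sum (x : Elem n → ℝ) :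
    ∑ e : Choice n B, jointProb n B x e = 1 := by
  have h := Finset.prod_univ_sum (fun s : Slot B => (Finset.univ : Finset (Option (Fin (n s.1)))))
    (fun s o => prob n x s.1 o)
  have h2 : ∑ e ∈ Fintype.piFinset
      (fun s : Slot B => (Finset.univ : Finset (Option (Fin (n s.1))))),
      ∏ s : Slot B, prob n x s.1 (e s) = 1 := by
    rw [← h]
    exact Finset.prod_eq_one fun s _ => prob_sum x s.1
  simpa [jointProb, Fintype.piFinset_univ] using h2

end Aux2
section Deriv
variable {K : ℕ} {n B : Fin K → ℕ}

lemma hasDerivAt_update (x : Elem n → ℝ) (i j : Elem n) (t : ℝ) :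
    HasDerivAt (fun t => Function.update x i t j) (if j = i then 1 else 0) t := by
  by_cases h : j = i
  · subst h
    simp only [Function.update_self, if_pos rfl, ↓reduceIte]
    exact hasDerivAt_id t
  · simp only [Function.update_of_ne h, if_neg h]
    exact hasDerivAt_const t (x j)

lemma hasDerivAt_prob (x : Elem n → ℝ) (i : Elem n) (k : Fin K) (o : Option (Fin (n k)))
    (t : ℝ) :
    HasDerivAt (fun t => prob n (Function.update x i t) k o) (cfK n i k o) t := by
  cases o with
  | some m => simpa [prob, cfK] using hasDerivAt_update x i ⟨k, m⟩ t
  | none =>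
    have h : HasDerivAt (fun t => ∑ m : Fin (n k), Function.update x i t ⟨k, m⟩)
        (∑ m : Fin (n k), if (⟨k, m⟩ : Elem n) = i then (1:ℝ) else 0) t :=
      HasDerivAt.fun_sum fun m _ => hasDerivAt_update x i ⟨k, m⟩ t
    have h2 := h.const_sub 1
    have h3 : (∑ m : Fin (n k), if (⟨k, m⟩ : Elem n) = i then (1:ℝ) else 0)
        = if k = i.1 then 1 else 0 := by
      obtain ⟨k₁, m₁⟩ := i
      by_cases hk : k = k₁
      · subst hk
        simp [Sigma.mk.inj_iff]
      · simp [Sigma.mk.inj_iff, hk]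
    rw [h3] at h2
    by_cases hk : k = i.1 <;> simpa [prob, cfK, hk] using h2

lemma pderiv_ME_raw (f : Finset (Elem n) → ℝ) (x : Elem n → ℝ) (i : Elem n) :
    pderiv n (ME n B f) i x
      = ∑ e : Choice n B, f (chosen n B e Finset.univ) *
          ∑ s : Slot B, probExcept n B x s e * cfK n i s.1 (e s) := by
  have h : ∀ e : Choice n B, HasDerivAt (fun t => jointProb n B (Function.update x i t) e)
      (∑ s : Slot B, probExcept n B x s e * cfK n i s.1 (e s)) (x i) := by
    intro e
    have hp := HasDerivAt.fun_finsetProd (u := (Finset.univ : Finset (Slot B)))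
      (f := fun (s : Slot B) t => prob n (Function.update x i t) s.1 (e s))
      (f' := fun s => cfK n i s.1 (e s)) (x := x i)
      (fun s _ => hasDerivAt_prob x i s.1 (e s) (x i))
    simpa [jointProb, probExcept, Function.update_eq_self, smul_eq_mul, mul_comm]
      using hp
  have hME : HasDerivAt (fun t => ME n B f (Function.update x i t))
      (∑ e : Choice n B, f (chosen n B e Finset.univ) *
        ∑ s : Slot B, probExcept n B x s e * cfK n i s.1 (e s)) (x i) := by
    have := HasDerivAt.fun_sum (u := (Finset.univ : Finset (Choice n B)))
      (fun e _ => (h e).const_mul (f (chosen n B e Finset.univ)))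
    simpa [ME] using this
  exact hME.deriv

end Deriv
section Canon
variable {K : ℕ} {n B : Fin K → ℕ}

lemma sum_fib (s : Slot B) (G : Choice n B → ℝ) :
    ∑ e : Choice n B, G e
      = ∑ o : Option (Fin (n s.1)),
          ∑ e ∈ Finset.univ.filter (fun e : Choice n B => e s = o), G e := by
  have := Finset.sum_fiberwise_eq_sum_filter Finset.univ Finset.univ
    (fun e : Choice n B => e s) G
  simpa using this.symm

lemma sum_update_mul_jointProb (x : Elem n → ℝ) (s : Slot B) (o₀ : Option (Fin (n s.1)))
    (g : Choice n B → ℝ) :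
    ∑ e : Choice n B, g (Function.update e s o₀) * jointProb n B x e
      = ∑ e ∈ Finset.univ.filter (fun e : Choice n B => e s = o₀),
          g e * probExcept n B x s e := by
  have hbij : ∀ o : Option (Fin (n s.1)),
      ∑ e ∈ Finset.univ.filter (fun e : Choice n B => e s = o),
        g (Function.update e s o₀) * probExcept n B x s e
      = ∑ e ∈ Finset.univ.filter (fun e : Choice n B => e s = o₀),
          g e * probExcept n B x s e := by
    intro o
    refine Finset.sum_nbij' (fun e => Function.update e s o₀)
      (fun e => Function.update e s o) ?_ ?_ ?_ ?_ ?_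
    · intro e _; simp
    · intro e _; simp
    · intro e he
      simp only [Finset.mem_filter, Finset.mem_univ, true_and] at he
      show Function.update (Function.update e s o₀) s o = e
      rw [Function.update_idem, ← he, Function.update_eq_self]
    · intro e he
      simp only [Finset.mem_filter, Finset.mem_univ, true_and] at he
      show Function.update (Function.update e s o) s o₀ = e
      rw [Function.update_idem, ← he, Function.update_eq_self]
    · intro e _
      rw [probExcept_update]
  calc ∑ e : Choice n B, g (Function.update e s o₀) * jointProb n B x e
      = ∑ o : Option (Fin (n s.1)),
          ∑ e ∈ Finset.univ.filter (fun e : Choice n B => e s = o),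
            g (Function.update e s o₀) * jointProb n B x e :=
        sum_fib s _
    _ = ∑ o : Option (Fin (n s.1)), prob n x s.1 o *
          ∑ e ∈ Finset.univ.filter (fun e : Choice n B => e s = o),
            g (Function.update e s o₀) * probExcept n B x s e := by
        refine Finset.sum_congr rfl fun o _ => ?_
        rw [Finset.mul_sum]
        refine Finset.sum_congr rfl fun e he => ?_
        simp only [Finset.mem_filter, Finset.mem_univ, true_and] at he
        rw [jointProb_split x s e, he]; ring
    _ = ∑ o : Option (Fin (n s.1)), prob n x s.1 o *
          ∑ e ∈ Finset.univ.filter (fun e : Choice n B => e s = o₀),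
            g e * probExcept n B x s e := by
        refine Finset.sum_congr rfl fun o _ => ?_
        rw [hbij o]
    _ = _ := by
        rw [← Finset.sum_mul, prob_sum, one_mul]

lemma cfK_eq (k₀ : Fin K) (m₀ : Fin (n k₀)) (o : Option (Fin (n k₀))) :
    cfK n ⟨k₀, m₀⟩ k₀ o
      = (if o = some m₀ then 1 else 0) - (if o = none then 1 else 0) := by
  cases o with
  | none => simp [cfK]
  | some m => simp [cfK, Sigma.mk.inj_iff]

lemma cfK_ne (k₀ : Fin K) (m₀ : Fin (n k₀)) (k : Fin K) (hk : k ≠ k₀)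
    (o : Option (Fin (n k))) : cfK n ⟨k₀, m₀⟩ k o = 0 := by
  cases o with
  | none => simp [cfK, hk]
  | some m => simp [cfK, Sigma.mk.inj_iff, hk]

set_option maxHeartbeats 1000000 in
lemma pderiv_ME (f : Finset (Elem n) → ℝ) (x : Elem n → ℝ) (i : Elem n) :
    pderiv n (ME n B f) i x
      = ∑ b : Fin (B i.1), ∑ e : Choice n B,
          marg n f i (Qs n B e ⟨i.1, b⟩) * jointProb n B x e := by
  obtain ⟨k₀, m₀⟩ := i
  rw [pderiv_ME_raw]
  have step1 : ∑ e : Choice n B, f (chosen n B e Finset.univ) *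
        ∑ s : Slot B, probExcept n B x s e * cfK n ⟨k₀, m₀⟩ s.1 (e s)
      = ∑ s : Slot B, ∑ e : Choice n B,
          f (chosen n B e Finset.univ) * (probExcept n B x s e * cfK n ⟨k₀, m₀⟩ s.1 (e s)) := by
    rw [Finset.sum_comm]
    exact Finset.sum_congr rfl fun e _ => Finset.mul_sum _ _ _
  rw [step1]
  rw [← Finset.univ_sigma_univ, Finset.sum_sigma]
  rw [Finset.sum_eq_single k₀]
  · refine Finset.sum_congr rfl fun b _ => ?_
    have key : ∀ o₀ : Option (Fin (n k₀)),
        ∑ e : Choice n B, f (chosen n B (Function.update e ⟨k₀, b⟩ o₀) Finset.univ)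
            * jointProb n B x e
        = ∑ e ∈ Finset.univ.filter (fun e : Choice n B => e ⟨k₀, b⟩ = o₀),
            f (chosen n B e Finset.univ) * probExcept n B x ⟨k₀, b⟩ e :=
      fun o₀ => sum_update_mul_jointProb x ⟨k₀, b⟩ o₀ (fun e => f (chosen n B e Finset.univ))
    calc ∑ e : Choice n B, f (chosen n B e Finset.univ) *
            (probExcept n B x ⟨k₀, b⟩ e * cfK n ⟨k₀, m₀⟩ k₀ (e ⟨k₀, b⟩))
        = (∑ e ∈ Finset.univ.filter (fun e : Choice n B => e ⟨k₀, b⟩ = some m₀),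
              f (chosen n B e Finset.univ) * probExcept n B x ⟨k₀, b⟩ e)
          - ∑ e ∈ Finset.univ.filter (fun e : Choice n B => e ⟨k₀, b⟩ = none),
              f (chosen n B e Finset.univ) * probExcept n B x ⟨k₀, b⟩ e := by
          rw [Finset.sum_filter, Finset.sum_filter, ← Finset.sum_sub_distrib]
          refine Finset.sum_congr rfl fun e _ => ?_
          rw [cfK_eq]
          by_cases h1 : e ⟨k₀, b⟩ = some m₀ <;> by_cases h2 : e ⟨k₀, b⟩ = none <;>
            simp [h1, h2] <;> ring
      _ = ∑ e : Choice n B,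
            marg n f ⟨k₀, m₀⟩ (Qs n B e ⟨k₀, b⟩) * jointProb n B x e := by
          rw [← key (some m₀), ← key none, ← Finset.sum_sub_distrib]
          refine Finset.sum_congr rfl fun e _ => ?_
          rw [chosen_update, chosen_update]
          simp only [Option.map_some, Option.map_none, Option.toFinset_some,
            Option.toFinset_none, Finset.empty_union, ← Finset.insert_eq]
          rw [marg]; ring
  · intro k _ hk
    refine Finset.sum_eq_zero fun b _ => Finset.sum_eq_zero fun e _ => ?_
    rw [cfK_ne k₀ m₀ k hk]; ring
  · intro h; exact absurd (Finset.mem_univ k₀) h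

end Canon
section Xpart
variable {K : ℕ} {n B : Fin K → ℕ}

lemma marg_upd_eq (f : Finset (Elem n) → ℝ) (e : Choice n B) (s : Slot B) (m : Fin (n s.1)) :
    f (chosen n B (Function.update e s (some m)) Finset.univ)
      - f (chosen n B (Function.update e s none) Finset.univ)
    = marg n f ⟨s.1, m⟩ (Qs n B e s) := by
  rw [chosen_update, chosen_update]
  simp only [Option.map_some, Option.map_none, Option.toFinset_some,
    Option.toFinset_none, Finset.empty_union, ← Finset.insert_eq]
  rw [marg, Qs]

lemma slot_avg (f : Finset (Elem n) → ℝ) (x : Elem n → ℝ) (s : Slot B) :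
    ∑ m : Fin (n s.1), x ⟨s.1, m⟩ *
        ∑ e : Choice n B, marg n f ⟨s.1, m⟩ (Qs n B e s) * jointProb n B x e
      = ∑ e : Choice n B,
          (f (chosen n B e Finset.univ) - f (Qs n B e s)) * jointProb n B x e := by
  set T : Option (Fin (n s.1)) → ℝ := fun o =>
    ∑ e ∈ Finset.univ.filter (fun e : Choice n B => e s = o),
      f (chosen n B e Finset.univ) * probExcept n B x s e with hT
  have key : ∀ o₀ : Option (Fin (n s.1)),
      ∑ e : Choice n B, f (chosen n B (Function.update e s o₀) Finset.univ)
        * jointProb n B x e = T o₀ :=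
    fun o₀ => sum_update_mul_jointProb x s o₀ (fun e => f (chosen n B e Finset.univ))
  have hmarg : ∀ m : Fin (n s.1),
      ∑ e : Choice n B, marg n f ⟨s.1, m⟩ (Qs n B e s) * jointProb n B x e
        = T (some m) - T none := by
    intro m
    rw [← key (some m), ← key none, ← Finset.sum_sub_distrib]
    refine Finset.sum_congr rfl fun e _ => ?_
    rw [← marg_upd_eq]; ring
  have hQ : ∑ e : Choice n B, f (Qs n B e s) * jointProb n B x e = T none := key none
  have hR : ∑ e : Choice n B, f (chosen n B e Finset.univ) * jointProb n B x e
      = ∑ o : Option (Fin (n s.1)), prob n x s.1 o * T o := by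
    rw [sum_fib s]
    refine Finset.sum_congr rfl fun o _ => ?_
    rw [hT, Finset.mul_sum]
    refine Finset.sum_congr rfl fun e he => ?_
    simp only [Finset.mem_filter, Finset.mem_univ, true_and] at he
    rw [jointProb_split x s e, he]; ring
  have expand : ∑ e : Choice n B,
      (f (chosen n B e Finset.univ) - f (Qs n B e s)) * jointProb n B x e
      = (∑ o : Option (Fin (n s.1)), prob n x s.1 o * T o) - T none := by
    rw [← hR, ← hQ, ← Finset.sum_sub_distrib]
    exact Finset.sum_congr rfl fun e _ => by ring
  rw [expand, Fintype.sum_option]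
  have : ∀ m : Fin (n s.1), x ⟨s.1, m⟩ *
      ∑ e : Choice n B, marg n f ⟨s.1, m⟩ (Qs n B e s) * jointProb n B x e
      = x ⟨s.1, m⟩ * T (some m) - x ⟨s.1, m⟩ * T none := by
    intro m; rw [hmarg m]; ring
  rw [Finset.sum_congr rfl fun m _ => this m, Finset.sum_sub_distrib, ← Finset.sum_mul]
  simp only [prob]
  ring

lemma sum_x_grad (f : Finset (Elem n) → ℝ) (x : Elem n → ℝ) :
    ∑ i : Elem n, x i * pderiv n (ME n B f) i x
      = ∑ s : Slot B, ∑ e : Choice n B,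
          (f (chosen n B e Finset.univ) - f (Qs n B e s)) * jointProb n B x e := by
  have h1 : ∑ i : Elem n, x i * pderiv n (ME n B f) i x
      = ∑ k : Fin K, ∑ m : Fin (n k), x ⟨k, m⟩ *
          ∑ b : Fin (B k), ∑ e : Choice n B,
            marg n f ⟨k, m⟩ (Qs n B e ⟨k, b⟩) * jointProb n B x e := by
    rw [← Finset.univ_sigma_univ, Finset.sum_sigma]
    exact Finset.sum_congr rfl fun k _ => Finset.sum_congr rfl fun m _ => by
      rw [pderiv_ME]
  rw [h1, ← Finset.univ_sigma_univ, Finset.sum_sigma]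
  refine Finset.sum_congr rfl fun k _ => ?_
  have h2 : ∑ m : Fin (n k), x ⟨k, m⟩ *
        ∑ b : Fin (B k), ∑ e : Choice n B,
          marg n f ⟨k, m⟩ (Qs n B e ⟨k, b⟩) * jointProb n B x e
      = ∑ b : Fin (B k), ∑ m : Fin (n k), x ⟨k, m⟩ *
          ∑ e : Choice n B, marg n f ⟨k, m⟩ (Qs n B e ⟨k, b⟩) * jointProb n B x e := by
    rw [← Finset.sum_comm]
    exact Finset.sum_congr rfl fun m _ => Finset.mul_sum _ _ _
  rw [h2]
  exact Finset.sum_congr rfl fun b _ => slot_avg f x ⟨k, b⟩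

end Xpart
section SetLemmas
variable {K : ℕ} {n B : Fin K → ℕ}

lemma marg_nonneg (f : Finset (Elem n) → ℝ) (hmono : MonotoneSet n f) (v : Elem n)
    (A : Finset (Elem n)) : 0 ≤ marg n f v A := by
  rw [marg, sub_nonneg]
  exact hmono A (insert v A) (Finset.subset_insert v A)

lemma chain_below (f : Finset (Elem n) → ℝ) {α : ℝ} (t : Elem n → ℝ) :
    ∀ S : Finset (Elem n), ∀ C : Finset (Elem n),
      (∀ i ∈ S, 0 ≤ t i) →
      (∀ i ∈ S, ∀ C', C ⊆ C' → i ∉ C' → α * marg n f i C' ≤ t i) →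
      α * (f (S ∪ C) - f C) ≤ ∑ i ∈ S, t i := by
  intro S
  induction S using Finset.strongInduction with
  | _ S ih =>
    intro C ht0 htm
    by_cases hSC : ∃ v ∈ S, v ∉ C
    · obtain ⟨v, hvS, hvC⟩ := hSC
      have hIH := ih (S.erase v) (Finset.erase_ssubset hvS) (insert v C)
        (fun i hi => ht0 i (Finset.mem_of_mem_erase hi))
        (fun i hi C' hC' hiC' => htm i (Finset.mem_of_mem_erase hi) C'
          ((Finset.subset_insert v C).trans hC') hiC')
      have hunion : S.erase v ∪ insert v C = S ∪ C := by
        rw [Finset.union_insert, ← Finset.insert_union, Finset.insert_erase hvS]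
      have hmargv := htm v hvS C (Finset.Subset.refl C) hvC
      have hsum : ∑ i ∈ S.erase v, t i + t v = ∑ i ∈ S, t i := Finset.sum_erase_add S t hvS
      have hsplit : α * (f (S ∪ C) - f C)
          = α * (f (S.erase v ∪ insert v C) - f (insert v C)) + α * marg n f v C := by
        rw [hunion, marg]; ring
      rw [hsplit, ← hsum]
      exact add_le_add hIH hmargv
    · push_neg at hSC
      have hU : S ∪ C = C := Finset.union_eq_right.mpr hSC
      rw [hU]
      simpa using Finset.sum_nonneg ht0

lemma dr_above (f : Finset (Elem n) → ℝ) {α : ℝ} (hDR : WeaklyDR n f α) :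
    ∀ N : ℕ, ∀ A B' : Finset (Elem n), (B' \ A).card ≤ N → A ⊆ B' →
      α * ∑ v ∈ B' \ A, marg n f v (B'.erase v) ≤ f B' - f A := by
  intro N
  induction N with
  | zero =>
    intro A B' hc hAB
    have hE : B' \ A = ∅ := Finset.card_eq_zero.mp (Nat.le_zero.mp hc)
    have hBA : B' = A :=
      Finset.Subset.antisymm (Finset.sdiff_eq_empty_iff_subset.mp hE) hAB
    simp [hE, hBA]
  | succ N ihN =>
    intro A B' hc hAB
    by_cases hE : B' \ A = ∅
    · have hBA : B' = A :=
        Finset.Subset.antisymm (Finset.sdiff_eq_empty_iff_subset.mp hE) hAB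
      simp [hE, hBA]
    · obtain ⟨v, hv⟩ := Finset.nonempty_iff_ne_empty.mpr hE
      have hvB : v ∈ B' := (Finset.mem_sdiff.mp hv).1
      have hvA : v ∉ A := (Finset.mem_sdiff.mp hv).2
      have hstep : B' \ insert v A = (B' \ A).erase v := by
        rw [Finset.sdiff_insert]
      have hcard : (B' \ insert v A).card ≤ N := by
        rw [hstep, Finset.card_erase_of_mem hv]
        omega
      have hIH := ihN (insert v A) B' hcard (Finset.insert_subset hvB hAB)
      rw [hstep] at hIH
      have hsplit : ∑ v' ∈ B' \ A, marg n f v' (B'.erase v')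
          = ∑ v' ∈ (B' \ A).erase v, marg n f v' (B'.erase v') + marg n f v (B'.erase v) :=
        (Finset.sum_erase_add _ _ hv).symm
      have hsubA : A ⊆ B'.erase v := Finset.subset_erase.mpr ⟨hAB, hvA⟩
      have hDRv : α * marg n f v (B'.erase v) ≤ marg n f v A :=
        hDR A (B'.erase v) hsubA v (Finset.notMem_erase v B')
      have hmargA : marg n f v A = f (insert v A) - f A := rfl
      calc α * ∑ v' ∈ B' \ A, marg n f v' (B'.erase v')
          = α * ∑ v' ∈ (B' \ A).erase v, marg n f v' (B'.erase v')
            + α * marg n f v (B'.erase v) := by rw [hsplit]; ring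
        _ ≤ (f B' - f (insert v A)) + marg n f v A := add_le_add hIH hDRv
        _ = f B' - f A := by rw [hmargA]; ring

lemma Dsum_le (hn : ∀ k, 1 ≤ n k) (f : Finset (Elem n) → ℝ) (hmono : MonotoneSet n f)
    (e : Choice n B) :
    ∑ s : Slot B, (f (chosen n B e Finset.univ) - f (Qs n B e s))
      ≤ ∑ v ∈ chosen n B e Finset.univ,
          marg n f v ((chosen n B e Finset.univ).erase v) := by
  classical
  set R := chosen n B e Finset.univ with hR
  set P : Slot B → Prop := fun s => Qs n B e s ≠ R with hP
  set ψ : Slot B → Elem n :=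
    fun s => (e s).elim ⟨s.1, ⟨0, hn s.1⟩⟩ (fun m => ⟨s.1, m⟩) with hψ
  have hsome : ∀ s, P s → ∃ m, e s = some m := by
    intro s hs
    cases h : e s with
    | some m => exact ⟨m, rfl⟩
    | none =>
      exfalso
      apply hs
      rw [Qs, ← h, Function.update_eq_self]
  have hfacts : ∀ s, P s → ψ s ∉ Qs n B e s ∧ R = insert (ψ s) (Qs n B e s) := by
    intro s hs
    obtain ⟨m, hm⟩ := hsome s hs
    have hψs : ψ s = ⟨s.1, m⟩ := by rw [hψ]; simp [hm]
    have hcu := chosen_eq_union e s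
    rw [hm] at hcu
    simp only [Option.map_some, Option.toFinset_some, ← Finset.insert_eq] at hcu
    rw [hψs]
    constructor
    · intro hmem
      apply hs
      rw [hR, hcu, Finset.insert_eq_self.mpr hmem]
    · exact hcu
  have h0 : ∑ s : Slot B, (f R - f (Qs n B e s))
      = ∑ s ∈ Finset.univ.filter P, (f R - f (Qs n B e s)) := by
    symm
    refine Finset.sum_filter_of_ne fun s _ hne => ?_
    intro hQR
    exact hne (by rw [hQR, sub_self])
  have hQerase : ∀ s ∈ Finset.univ.filter P, Qs n B e s = R.erase (ψ s) := by
    intro s hs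
    rw [Finset.mem_filter] at hs
    obtain ⟨hnm, hins⟩ := hfacts s hs.2
    rw [hins, Finset.erase_insert hnm]
  have hmemR : ∀ s ∈ Finset.univ.filter P, ψ s ∈ R := by
    intro s hs
    rw [Finset.mem_filter] at hs
    obtain ⟨hnm, hins⟩ := hfacts s hs.2
    rw [hins]
    exact Finset.mem_insert_self _ _
  have h1 : ∑ s ∈ Finset.univ.filter P, (f R - f (Qs n B e s))
      = ∑ s ∈ Finset.univ.filter P, marg n f (ψ s) (R.erase (ψ s)) := by
    refine Finset.sum_congr rfl fun s hs => ?_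
    rw [marg, Finset.insert_erase (hmemR s hs), hQerase s hs]
  have hinj : ∀ s ∈ Finset.univ.filter P, ∀ s' ∈ Finset.univ.filter P,
      ψ s = ψ s' → s = s' := by
    intro s hs s' hs'  hψeq
    by_contra hne
    rw [Finset.mem_filter] at hs hs'
    obtain ⟨hnm, _⟩ := hfacts s hs.2
    apply hnm
    obtain ⟨m', hm'⟩ := hsome s' hs'.2
    have hψs' : ψ s' = ⟨s'.1, m'⟩ := by rw [hψ]; simp [hm']
    rw [Qs, mem_chosen]
    refine ⟨s', Finset.mem_univ _, ?_⟩
    rw [Function.update_of_ne (fun h => hne h.symm), hm', hψeq, hψs']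
    rfl
  have h2 : ∑ s ∈ Finset.univ.filter P, marg n f (ψ s) (R.erase (ψ s))
      = ∑ v ∈ (Finset.univ.filter P).image ψ, marg n f v (R.erase v) :=
    (Finset.sum_image (g := ψ) (f := fun v => marg n f v (R.erase v)) hinj).symm
  have h3 : (Finset.univ.filter P).image ψ ⊆ R := by
    intro v hv
    rw [Finset.mem_image] at hv
    obtain ⟨s, hs, rfl⟩ := hv
    exact hmemR s hs
  calc ∑ s : Slot B, (f R - f (Qs n B e s))
      = ∑ v ∈ (Finset.univ.filter P).image ψ, marg n f v (R.erase v) := by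
        rw [h0, h1, h2]
    _ ≤ ∑ v ∈ R, marg n f v (R.erase v) :=
        Finset.sum_le_sum_of_subset_of_nonneg h3
          (fun v _ _ => marg_nonneg f hmono v _)

end SetLemmas
section MoreLemmas
variable {K : ℕ} {n B : Fin K → ℕ}

lemma below_S (f : Finset (Elem n) → ℝ) (hmono : MonotoneSet n f) {γ : ℝ}
    (hγ0 : 0 ≤ γ) (hWB : WeaklyBelow n f γ) (S R : Finset (Elem n)) :
    γ * (f S - f R) ≤ ∑ i ∈ S, marg n f i R := by
  have h := hWB R (S ∪ R) Finset.subset_union_right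
  rw [Finset.union_sdiff_right] at h
  have h2 : ∑ v ∈ S \ R, marg n f v R ≤ ∑ i ∈ S, marg n f i R :=
    Finset.sum_le_sum_of_subset_of_nonneg (Finset.sdiff_subset)
      (fun v _ _ => marg_nonneg f hmono v R)
  have h3 : f S ≤ f (S ∪ R) := hmono S (S ∪ R) Finset.subset_union_left
  nlinarith
  
lemma below_step (f : Finset (Elem n) → ℝ) (hmono : MonotoneSet n f) {γ : ℝ}
    (hγ0 : 0 ≤ γ) (hγ1 : γ ≤ 1) (hWB : WeaklyBelow n f γ)
    (e : Choice n B) (s : Slot B) (i : Elem n) :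
    γ * marg n f i (chosen n B e Finset.univ)
      - (1 - γ) * (f (chosen n B e Finset.univ) - f (Qs n B e s))
      ≤ marg n f i (Qs n B e s) := by
  set R := chosen n B e Finset.univ with hR
  set Q := Qs n B e s with hQdef
  rcases R_cases e s with hRQ | ⟨v, hvQ, hRv⟩
  · rw [← hR, ← hQdef] at hRQ
    rw [hRQ]
    have h0 := marg_nonneg f hmono i Q
    nlinarith
  · rw [← hR, ← hQdef] at hRv
    have hQR : Q ⊆ R := Qs_subset e s
    have hvR : v ∈ R := by rw [hRv]; exact Finset.mem_insert_self _ _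
    have hfRQ : f R - f Q = marg n f v Q := by rw [hRv, marg]
    have hb := hWB Q (insert i R) (hQR.trans (Finset.subset_insert i R))
    have hD : insert i R \ Q ⊆ {i, v} := by
      intro u hu
      rw [Finset.mem_sdiff, Finset.mem_insert] at hu
      rcases hu.1 with h | h
      · simp [h]
      · rw [hRv, Finset.mem_insert] at h
        rcases h with h | h
        · simp [h]
        · exact absurd h hu.2
    have hsum2 : ∑ u ∈ insert i R \ Q, marg n f u Q
        ≤ ∑ u ∈ ({i, v} : Finset (Elem n)), marg n f u Q :=
      Finset.sum_le_sum_of_subset_of_nonneg hD (fun u _ _ => marg_nonneg f hmono u Q)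
    have hpair : ∑ u ∈ ({i, v} : Finset (Elem n)), marg n f u Q
        ≤ marg n f i Q + marg n f v Q := by
      by_cases hiv : i = v
      · subst hiv
        have hvv : ({i, i} : Finset (Elem n)) = {i} := by
          ext u; simp
        rw [hvv, Finset.sum_singleton]
        have := marg_nonneg f hmono i Q
        linarith
      · rw [Finset.sum_pair hiv]
    have hchain : γ * (f (insert i R) - f Q) ≤ marg n f i Q + marg n f v Q :=
      le_trans hb (le_trans hsum2 hpair)
    have hmiR : marg n f i R = f (insert i R) - f R := rfl
    have hexp : γ * (f (insert i R) - f R)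
        = γ * (f (insert i R) - f Q) - γ * marg n f v Q := by
      rw [← hfRQ]; ring
    rw [hmiR, hfRQ]
    linarith [hchain, hexp]

lemma sum_over_S (S : Finset (Elem n)) (hS : Feasible n B S) (g : Fin K → ℝ)
    (hg : ∀ k, 0 ≤ g k) :
    ∑ i ∈ S, g i.1 ≤ ∑ k : Fin K, (B k : ℝ) * g k := by
  have h1 : ∑ i ∈ S, g i.1
      = ∑ k : Fin K, ∑ i ∈ S.filter (fun i => i.1 = k), g i.1 := by
    have := Finset.sum_fiberwise_eq_sum_filter S Finset.univ
      (fun i : Elem n => i.1) (fun i => g i.1)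
    simpa using this.symm
  rw [h1]
  refine Finset.sum_le_sum fun k _ => ?_
  have h2 : ∑ i ∈ S.filter (fun i => i.1 = k), g i.1
      = ((S.filter (fun i => i.1 = k)).card : ℝ) * g k := by
    rw [Finset.sum_congr rfl (fun i hi => ?_), Finset.sum_const, nsmul_eq_mul]
    rw [Finset.mem_filter] at hi
    rw [hi.2]
  rw [h2]
  exact mul_le_mul_of_nonneg_right (by exact_mod_cast hS k) (hg k)

end MoreLemmas
section Assembly
variable {K : ℕ} {n B : Fin K → ℕ}

/-- The per-outcome averaged marginal gain of element `i`. -/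
def tS (n B : Fin K → ℕ) (f : Finset (Elem n) → ℝ) (i : Elem n) (e : Choice n B) : ℝ :=
  (B i.1 : ℝ)⁻¹ * ∑ b : Fin (B i.1), marg n f i (Qs n B e ⟨i.1, b⟩)

/-- The per-outcome total removal loss. -/
def Dl (n B : Fin K → ℕ) (f : Finset (Elem n) → ℝ) (e : Choice n B) : ℝ :=
  ∑ s : Slot B, (f (chosen n B e Finset.univ) - f (Qs n B e s))

lemma hSpart (f : Finset (Elem n) → ℝ) (x : Elem n → ℝ) (S : Finset (Elem n)) :
    ∑ i ∈ S, (B i.1 : ℝ)⁻¹ * pderiv n (ME n B f) i x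
      = ∑ e : Choice n B, (∑ i ∈ S, tS n B f i e) * jointProb n B x e := by
  have h1 : ∀ i : Elem n, (B i.1 : ℝ)⁻¹ * pderiv n (ME n B f) i x
      = ∑ e : Choice n B, tS n B f i e * jointProb n B x e := by
    intro i
    rw [pderiv_ME, Finset.sum_comm, Finset.mul_sum]
    refine Finset.sum_congr rfl fun e _ => ?_
    rw [tS, ← Finset.sum_mul]; ring
  rw [Finset.sum_congr rfl fun i _ => h1 i, Finset.sum_comm]
  exact Finset.sum_congr rfl fun e _ => (Finset.sum_mul _ _ _).symm

lemma hinner (f : Finset (Elem n) → ℝ) (x : Elem n → ℝ) (S : Finset (Elem n)) :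
    inner' n (fun i => indVec n B S i - x i) (grad n (ME n B f) x)
      = ∑ e : Choice n B, ((∑ i ∈ S, tS n B f i e) - Dl n B f e) * jointProb n B x e := by
  rw [inner']
  have h1 : ∀ i : Elem n, (indVec n B S i - x i) * grad n (ME n B f) x i
      = (if i ∈ S then (B i.1 : ℝ)⁻¹ * pderiv n (ME n B f) i x else 0)
        - x i * pderiv n (ME n B f) i x := by
    intro i
    rw [indVec]
    by_cases h : i ∈ S <;> simp [h, grad] <;> ring
  rw [Finset.sum_congr rfl fun i _ => h1 i, Finset.sum_sub_distrib,
    Finset.sum_ite_mem, Finset.univ_inter, hSpart, sum_x_grad]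
  have h2 : ∑ s : Slot B, ∑ e : Choice n B,
      (f (chosen n B e Finset.univ) - f (Qs n B e s)) * jointProb n B x e
      = ∑ e : Choice n B, Dl n B f e * jointProb n B x e := by
    rw [Finset.sum_comm]
    exact Finset.sum_congr rfl fun e _ => by rw [Dl, Finset.sum_mul]
  rw [h2, ← Finset.sum_sub_distrib]
  exact Finset.sum_congr rfl fun e _ => by ring

lemma main_reduce (f : Finset (Elem n) → ℝ) (x : Elem n → ℝ) (hx : InSimplex n x)
    (S : Finset (Elem n)) (c1 c2 : ℝ)
    (hpt : ∀ e : Choice n B, c1 * f S - c2 * f (chosen n B e Finset.univ)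
      ≤ (∑ i ∈ S, tS n B f i e) - Dl n B f e) :
    c1 * f S - c2 * ME n B f x
      ≤ inner' n (fun i => indVec n B S i - x i) (grad n (ME n B f) x) := by
  rw [hinner]
  have heq : c1 * f S - c2 * ME n B f x
      = ∑ e : Choice n B,
          (c1 * f S - c2 * f (chosen n B e Finset.univ)) * jointProb n B x e := by
    have h3 : ∑ e : Choice n B,
        (c1 * f S - c2 * f (chosen n B e Finset.univ)) * jointProb n B x e
        = c1 * f S * (∑ e : Choice n B, jointProb n B x e)
          - c2 * ∑ e : Choice n B, f (chosen n B e Finset.univ) * jointProb n B x e := by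
      rw [Finset.mul_sum, Finset.mul_sum, ← Finset.sum_sub_distrib]
      exact Finset.sum_congr rfl fun e _ => by ring
    rw [h3, jointProb_sum, mul_one, ME]
  rw [heq]
  exact Finset.sum_le_sum fun e _ =>
    mul_le_mul_of_nonneg_right (hpt e) (jointProb_nonneg hx e)

end Assembly
theorem multinoulliExtension_directional_gap_bound {K : ℕ} (n B : Fin K → ℕ) (hn : ∀ k, 1 ≤ n k)
    (hB : ∀ k, 0 < B k) (hBn : ∀ k, B k ≤ n k)
    (f : Finset (Elem n) → ℝ) (hf0 : ∀ S, 0 ≤ f S)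
    (hmono : MonotoneSet n f)
    (S : Finset (Elem n)) (hS : Feasible n B S)
    (x : Elem n → ℝ) (hx : InSimplex n x) :
    (∀ α : ℝ, 0 < α → α ≤ 1 → WeaklyDR n f α →
      α * f S - (α + α⁻¹) * ME n B f x ≤
        inner' n (fun i => indVec n B S i - x i) (grad n (ME n B f) x)) ∧
    (∀ γ β : ℝ, 0 < γ → γ ≤ 1 → 1 ≤ β → WeaklyBelow n f γ → WeaklyAbove n f β →
      γ ^ 2 * f S - (β + β * (1 - γ) + γ ^ 2) * ME n B f x ≤
        inner' n (fun i => indVec n B S i - x i) (grad n (ME n B f) x)) := by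
  classical
  have htS0 : ∀ (e : Choice n B) (i : Elem n), 0 ≤ tS n B f i e := fun e i =>
    mul_nonneg (inv_nonneg.mpr (Nat.cast_nonneg _))
      (Finset.sum_nonneg fun b _ => marg_nonneg f hmono i _)
  have hdiff0 : ∀ (e : Choice n B) (s : Slot B),
      0 ≤ f (chosen n B e Finset.univ) - f (Qs n B e s) := fun e s =>
    sub_nonneg.mpr (hmono _ _ (Qs_subset e s))
  have hD0 : ∀ e : Choice n B, 0 ≤ Dl n B f e := fun e =>
    Finset.sum_nonneg fun s _ => hdiff0 e s
  have hDsum : ∀ e : Choice n B, Dl n B f e ≤ ∑ v ∈ chosen n B e Finset.univ,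
      marg n f v ((chosen n B e Finset.univ).erase v) := fun e => Dsum_le hn f hmono e
  have hDsig : ∀ e : Choice n B, Dl n B f e = ∑ k : Fin K, ∑ b : Fin (B k),
      (f (chosen n B e Finset.univ) - f (Qs n B e ⟨k, b⟩)) := by
    intro e
    rw [Dl, ← Finset.univ_sigma_univ, Finset.sum_sigma]
  have hBne : ∀ k : Fin K, ((B k : ℝ)) ≠ 0 := fun k =>
    Nat.cast_ne_zero.mpr (hB k).ne'
  have hBpos : ∀ k : Fin K, (0:ℝ) < (B k : ℝ) := fun k => by exact_mod_cast hB k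
  constructor
  · -- (i) α-weakly DR-submodular
    intro α hα0 hα1 hDR
    refine main_reduce f x hx S α (α + α⁻¹) ?_
    intro e
    set R := chosen n B e Finset.univ with hRdef
    have htm : ∀ i ∈ S, ∀ C', R ⊆ C' → i ∉ C' → α * marg n f i C' ≤ tS n B f i e := by
      intro i _ C' hC' hiC'
      have hb : ∀ b : Fin (B i.1), α * marg n f i C' ≤ marg n f i (Qs n B e ⟨i.1, b⟩) :=
        fun b => hDR (Qs n B e ⟨i.1, b⟩) C' ((Qs_subset e _).trans hC') i hiC'
      have hsum : (B i.1 : ℝ) * (α * marg n f i C')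
          ≤ ∑ b : Fin (B i.1), marg n f i (Qs n B e ⟨i.1, b⟩) := by
        have h := Finset.card_nsmul_le_sum Finset.univ
          (fun b : Fin (B i.1) => marg n f i (Qs n B e ⟨i.1, b⟩)) _ (fun b _ => hb b)
        simpa [nsmul_eq_mul] using h
      calc α * marg n f i C'
          = (B i.1 : ℝ)⁻¹ * ((B i.1 : ℝ) * (α * marg n f i C')) :=
            (inv_mul_cancel_left₀ (hBne i.1) _).symm
        _ ≤ tS n B f i e := by
            rw [tS]
            exact mul_le_mul_of_nonneg_left hsum (inv_nonneg.mpr (Nat.cast_nonneg _))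
    have hchain := chain_below f (fun i => tS n B f i e) S R
      (fun i _ => htS0 e i) htm
    have hfS : f S ≤ f (S ∪ R) := hmono _ _ Finset.subset_union_left
    have hDb : Dl n B f e ≤ α⁻¹ * f R := by
      have h1 := dr_above f hDR R.card ∅ R (by simp) (Finset.empty_subset _)
      rw [Finset.sdiff_empty] at h1
      have h2 : α * Dl n B f e ≤ f R := by
        have h3 : α * Dl n B f e ≤ α * ∑ v ∈ R, marg n f v (R.erase v) :=
          mul_le_mul_of_nonneg_left (hDsum e) hα0.le
        have := hf0 ∅
        linarith
      calc Dl n B f e = α⁻¹ * (α * Dl n B f e) := by field_simp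
        _ ≤ α⁻¹ * f R := mul_le_mul_of_nonneg_left h2 (inv_nonneg.mpr hα0.le)
    have h4 : α * (f S - f R) ≤ α * (f (S ∪ R) - f R) :=
      mul_le_mul_of_nonneg_left (by linarith) hα0.le
    have goal1 : α * f S - (α + α⁻¹) * f R
        ≤ (∑ i ∈ S, tS n B f i e) - Dl n B f e := by
      have hx1 : α * (f S - f R) = α * f S - α * f R := by ring
      have hx2 : (α + α⁻¹) * f R = α * f R + α⁻¹ * f R := by ring
      linarith [hchain, h4, hDb]
    exact goal1
  · -- (ii) (γ,β)-weakly submodular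
    intro γ β hγ0 hγ1 hβ hWB hWA
    refine main_reduce f x hx S (γ ^ 2) (β + β * (1 - γ) + γ ^ 2) ?_
    intro e
    set R := chosen n B e Finset.univ with hRdef
    set g : Fin K → ℝ :=
      fun k => (B k : ℝ)⁻¹ * ∑ b : Fin (B k), (f R - f (Qs n B e ⟨k, b⟩)) with hgdef
    have hg0 : ∀ k, 0 ≤ g k := fun k =>
      mul_nonneg (inv_nonneg.mpr (Nat.cast_nonneg _))
        (Finset.sum_nonneg fun b _ => hdiff0 e ⟨k, b⟩)
    have hti : ∀ i ∈ S, γ * marg n f i R - (1 - γ) * g i.1 ≤ tS n B f i e := by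
      intro i _
      have hb : ∀ b : Fin (B i.1),
          γ * marg n f i R - (1 - γ) * (f R - f (Qs n B e ⟨i.1, b⟩))
            ≤ marg n f i (Qs n B e ⟨i.1, b⟩) :=
        fun b => below_step f hmono hγ0.le hγ1 hWB e ⟨i.1, b⟩ i
      have hsum := Finset.sum_le_sum fun b (_ : b ∈ Finset.univ) => hb b
      have hlhs : ∑ b : Fin (B i.1),
          (γ * marg n f i R - (1 - γ) * (f R - f (Qs n B e ⟨i.1, b⟩)))
          = (B i.1 : ℝ) * (γ * marg n f i R)
            - (1 - γ) * ∑ b : Fin (B i.1), (f R - f (Qs n B e ⟨i.1, b⟩)) := by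
        rw [Finset.sum_sub_distrib, Finset.sum_const, Finset.card_univ,
          Fintype.card_fin, nsmul_eq_mul, ← Finset.mul_sum]
      rw [hlhs] at hsum
      have hmul := mul_le_mul_of_nonneg_left hsum
        (inv_nonneg.mpr (Nat.cast_nonneg (B i.1)))
      rw [tS]
      refine le_trans (le_of_eq ?_) hmul
      rw [hgdef]
      field_simp [hBne i.1]
    have hsumS := Finset.sum_le_sum hti
    have hlhsS : ∑ i ∈ S, (γ * marg n f i R - (1 - γ) * g i.1)
        = γ * ∑ i ∈ S, marg n f i R - (1 - γ) * ∑ i ∈ S, g i.1 := by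
      rw [Finset.sum_sub_distrib, ← Finset.mul_sum, ← Finset.mul_sum]
    rw [hlhsS] at hsumS
    have hbelowS : γ * (f S - f R) ≤ ∑ i ∈ S, marg n f i R :=
      below_S f hmono hγ0.le hWB S R
    have hSG : ∑ i ∈ S, g i.1 ≤ Dl n B f e := by
      have h1 := sum_over_S S hS g hg0
      have h2 : ∑ k : Fin K, (B k : ℝ) * g k = Dl n B f e := by
        rw [hDsig e]
        refine Finset.sum_congr rfl fun k _ => ?_
        rw [hgdef, mul_inv_cancel_left₀ (hBne k)]
      linarith
    have hDb : Dl n B f e ≤ β * f R := by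
      have h1 := hWA ∅ R (Finset.empty_subset _)
      rw [Finset.sdiff_empty] at h1
      have h2 := hDsum e
      have h3 := hf0 ∅
      have hβ0 : (0:ℝ) ≤ β := by linarith
      nlinarith
    -- combine
    have e1 : γ * (γ * (f S - f R)) ≤ γ * ∑ i ∈ S, marg n f i R :=
      mul_le_mul_of_nonneg_left hbelowS hγ0.le
    have e2 : (1 - γ) * ∑ i ∈ S, g i.1 ≤ (1 - γ) * Dl n B f e :=
      mul_le_mul_of_nonneg_left hSG (by linarith)
    have e3 : (1 - γ) * Dl n B f e ≤ (1 - γ) * (β * f R) :=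
      mul_le_mul_of_nonneg_left hDb (by linarith)
    have goal2 : γ ^ 2 * f S - (β + β * (1 - γ) + γ ^ 2) * f R
        ≤ (∑ i ∈ S, tS n B f i e) - Dl n B f e := by
      nlinarith [hsumS, e1, e2, e3, hDb]
    exact goal2

end Multinoulli
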